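/- Let H be an eight-dimensional Hurwitz algebra with norm n, unit e, and a, b ∈ H anisotropic (n(a), n(b) ≠ 0). Then the isotope H' = H_{R_a, L_b}, with multiplication x·y = (xa)(by), is a unital generalized composition algebra with unit e' = (ab)⁻¹ and multiplier λ = n(ab), i.e., n(x·y) = n(ab)·n(x)n(y) for all x, y. -/

import Mathlib

/-- Let `H` be an eight-dimensional Hurwitz algebra with unit `e` and let
`a, b ∈ H` be anisotropic. Then the isotope `H' = H_{R_a, L_b}`, with
multiplication `x·y = (xa)(by)`, is a unital generalized composition algebra
with unit `e' = (ab)⁻¹` and multiplier `n(ab)`. -/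
theorem stmt17 {k H : Type*} [Field k] (hchar : (2 : k) ≠ 0)
    [AddCommGroup H] [Module k H] [FiniteDimensional k H]
    (hdim : Module.finrank k H = 8)
    (n : QuadraticForm k H)
    (hnd : ∀ x : H, (∀ y : H, QuadraticMap.polar n x y = 0) → x = 0)
    (mul : H →ₗ[k] H →ₗ[k] H)
    (hcomp : ∀ x y : H, n (mul x y) = n x * n y)
    (e : H) (he : n e = 1)
    (hunitl : ∀ x : H, mul e x = x) (hunitr : ∀ x : H, mul x e = x)
    (a b : H) (ha : n a ≠ 0) (hb : n b ≠ 0) :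
    ∃ e' : H,
      -- e' = (ab)⁻¹, the inverse of ab in H
      mul e' (mul a b) = e ∧ mul (mul a b) e' = e ∧
      -- e' is the unit of H' = H_{R_a, L_b}
      (∀ x : H, mul (mul e' a) (mul b x) = x) ∧
      (∀ x : H, mul (mul x a) (mul b e') = x) ∧
      -- H' is a generalized composition algebra with multiplier n(ab)
      (∀ x y : H, n (mul (mul x a) (mul b y)) = n (mul a b) * (n x * n y)) := by
  set P : H → H → k := fun x y => QuadraticMap.polar n x y with hPdef
  have hPe : ∀ x y : H, P x y = n (x + y) - n x - n y := fun _ _ => rfl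
  have hPsub : ∀ u v w : H, P (u - v) w = P u w - P v w := by
    intro u v w; simp only [hPdef]
    exact QuadraticMap.polar_sub_left n u v w
  have hPsmul : ∀ (c : k) (u w : H), P (c • u) w = c * P u w := by
    intro c u w; simp only [hPdef]
    simpa using QuadraticMap.polar_smul_left (Q := n) c u w
  -- linearization of the composition law in the right variable
  have hP1 : ∀ x y z : H, P (mul x y) (mul x z) = n x * P y z := by
    intro x y z
    have h : mul x y + mul x z = mul x (y + z) := (map_add (mul x) y z).symm
    rw [hPe, hPe, h, hcomp, hcomp, hcomp]; ring
  -- linearization in the left variable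
  have hP2 : ∀ x y z : H, P (mul x z) (mul y z) = P x y * n z := by
    intro x y z
    have h : mul x z + mul y z = mul (x + y) z := by
      rw [map_add]; rfl
    rw [hPe, hPe, h, hcomp, hcomp, hcomp]; ring
  -- full linearization
  have hP3 : ∀ x y u v : H,
      P (mul x y) (mul u v) + P (mul u y) (mul x v) = P x u * P y v := by
    intro x y u v
    have h1 := hP2 x u (y + v)
    have h2 := hP2 x u y
    have h3 := hP2 x u v
    have hx : mul x (y + v) = mul x y + mul x v := map_add (mul x) y v
    have hu : mul u (y + v) = mul u y + mul u v := map_add (mul u) y v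
    rw [hx, hu] at h1
    have hnv : n (y + v) = n y + n v + P y v := by rw [hPe]; ring
    rw [hnv] at h1
    have hexp : P (mul x y + mul x v) (mul u y + mul u v) =
        P (mul x y) (mul u y) + P (mul x y) (mul u v) +
        P (mul x v) (mul u y) + P (mul x v) (mul u v) := by
      simp only [hPdef]
      simp only [QuadraticMap.polar_add_left, QuadraticMap.polar_add_right]
      ring
    rw [hexp, h2, h3] at h1
    have hc : P (mul u y) (mul x v) = P (mul x v) (mul u y) :=
      QuadraticMap.polar_comm n _ _
    rw [hc]
    linear_combination h1
  have hPc : ∀ x y : H, P x y = P y x := fun x y => QuadraticMap.polar_comm n x y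
  -- adjoint-type identities
  have hadjL : ∀ x y z : H, P (mul x y) z = P x e * P y z - P y (mul x z) := by
    intro x y z
    have h := hP3 x y e z
    rw [hunitl, hunitl] at h
    linear_combination h
  have hadjR : ∀ x y z : H, P (mul x y) z = P x z * P y e - P (mul z y) x := by
    intro x y z
    have h := hP3 x y z e
    rw [hunitr, hunitr] at h
    linear_combination h
  -- trace of a product
  have hPmulE : ∀ x y : H, P (mul x y) e = P x e * P y e - P x y := by
    intro x y
    have h := hadjR x y e
    rw [hunitl] at h
    rw [h, hPc y x]
  -- Kirmse identities (via nondegeneracy)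
  have hxx : ∀ x y : H, mul x (mul x y) = P x e • mul x y - n x • y := by
    intro x y
    refine sub_eq_zero.mp (hnd _ fun z => ?_)
    show P _ z = 0
    rw [hPsub, hPsub, hPsmul, hPsmul]
    have h1 := hadjL x (mul x y) z
    have h2 := hP1 x y z
    linear_combination h1 - h2
  have hyy : ∀ x y : H, mul (mul y x) x = P x e • mul y x - n x • y := by
    intro x y
    refine sub_eq_zero.mp (hnd _ fun z => ?_)
    show P _ z = 0
    rw [hPsub, hPsub, hPsmul, hPsmul]
    have h1 := hadjR (mul y x) x z
    have h2 := hP2 z y x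
    have h3 := hPc z y
    linear_combination h1 - h2 - n x * h3
  -- conjugation
  set C : H → H := fun x => P x e • e - x with hC
  have hmul_subL : ∀ (c : k) (u v w : H), mul (c • u - v) w = c • mul u w - mul v w := by
    intro c u v w
    rw [map_sub, map_smul]; rfl
  have hmul_subR : ∀ (c : k) (u v w : H), mul w (c • u - v) = c • mul w u - mul w v := by
    intro c u v w
    rw [map_sub, map_smul]
  have hmul_smulL : ∀ (c : k) (u v : H), mul (c • u) v = c • mul u v := by
    intro c u v
    rw [map_smul]; rfl
  have hmul_smulR : ∀ (c : k) (u v : H), mul u (c • v) = c • mul u v := by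
    intro c u v
    rw [map_smul]
  have hCmulL : ∀ x y : H, mul (C x) (mul x y) = n x • y := by
    intro x y
    show mul (P x e • e - x) (mul x y) = n x • y
    rw [hmul_subL, hunitl, hxx]
    abel
  have hCmulR : ∀ x y : H, mul (mul y x) (C x) = n x • y := by
    intro x y
    show mul (mul y x) (P x e • e - x) = n x • y
    rw [hmul_subR, hunitr, hyy]
    abel
  have hxCx : ∀ x : H, mul x (C x) = n x • e := by
    intro x
    have := hCmulR x e
    rwa [hunitl] at this
  have hCxx : ∀ x : H, mul (C x) x = n x • e := by
    intro x
    have := hCmulL x e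
    rwa [hunitr] at this
  have hmulaa : ∀ x : H, mul x x = P x e • x - n x • e := by
    intro x
    have := hxx x e
    rwa [hunitr] at this
  -- key computation: P ((ab)a) z
  have key1 : ∀ z : H, P (mul (mul a b) a) z =
      P (mul a b) e * P a z - n a * P b e * P e z + n a * P b z := by
    intro z
    have f1 := hadjR (mul a b) a z
    have f2 := hP3 z a a b
    have f4 : P (mul a a) (mul z b) =
        P a e * P a (mul z b) - n a * P e (mul z b) := by
      rw [hmulaa a, hPsub, hPsmul, hPsmul]
    have f5 : P a (mul z b) = P z a * P b e - P (mul a b) z := by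
      rw [hPc]; exact hadjR z b a
    have f6 : P e (mul z b) = P z e * P b e - P z b := by
      rw [hPc]; exact hPmulE z b
    have f7 := hPmulE a b
    have g1 := hPc z a
    have g2 := hPc z e
    have g3 := hPc z b
    rw [f5, f6] at f4
    rw [f4] at f2
    linear_combination f1 - f2 + P a z * f7 + (P a b - P a e * P b e) * g1 -
      n a * P b e * g2 + n a * g3 + (2 * (P a e * P b e - P a b)) * g1 -
      2 * P a z * f7
  -- key computation: P (b(ab)) z
  have key2 : ∀ z : H, P (mul b (mul a b)) z =
      P (mul a b) e * P b z - n b * P a e * P e z + n b * P a z := by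
    intro z
    have g1 := hadjL b (mul a b) z
    have g2 := hP3 a b b z
    have g4 : P (mul b b) (mul a z) =
        P b e * P b (mul a z) - n b * P e (mul a z) := by
      rw [hmulaa b, hPsub, hPsmul, hPsmul]
    have g5 : P b (mul a z) = P a e * P z b - P z (mul a b) := by
      rw [hPc]; exact hadjL a z b
    have g6 : P e (mul a z) = P a e * P z e - P a z := by
      rw [hPc]; exact hPmulE a z
    have g7 := hPmulE a b
    have w1 := hPc z b
    have w2 := hPc z e
    have w3 := hPc z (mul a b)
    rw [g5, g6] at g4
    rw [g4] at g2
    linear_combination g1 - g2 + P b z * g7 + (P a b - P a e * P b e) * w1 -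
      n b * P a e * w2 - P b e * w3 + (2 * P a e * P b e - P a b) * w1 -
      2 * P b z * g7
  -- the two key products
  have hA : mul (C (mul a b)) a = n a • C b := by
    refine sub_eq_zero.mp (hnd _ fun z => ?_)
    show P _ z = 0
    have hml : mul (C (mul a b)) a = P (mul a b) e • a - mul (mul a b) a := by
      show mul (P (mul a b) e • e - mul a b) a = _
      rw [hmul_subL, hunitl]
    rw [hml]
    have hcb : (n a • C b : H) = n a • (P b e • e - b) := rfl
    rw [hcb, smul_sub, smul_smul]
    have expand : P (P (mul a b) e • a - mul (mul a b) a -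
        ((n a * P b e) • e - n a • b)) z =
        P (mul a b) e * P a z - P (mul (mul a b) a) z -
        (n a * P b e * P e z - n a * P b z) := by
      rw [hPsub, hPsub, hPsub, hPsmul, hPsmul, hPsmul]
    rw [expand, key1 z]; ring
  have hB : mul b (C (mul a b)) = n b • C a := by
    refine sub_eq_zero.mp (hnd _ fun z => ?_)
    show P _ z = 0
    have hml : mul b (C (mul a b)) = P (mul a b) e • b - mul b (mul a b) := by
      show mul b (P (mul a b) e • e - mul a b) = _
      rw [hmul_subR, hunitr]
    rw [hml]
    have hca : (n b • C a : H) = n b • (P a e • e - a) := rfl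
    rw [hca, smul_sub, smul_smul]
    have expand : P (P (mul a b) e • b - mul b (mul a b) -
        ((n b * P a e) • e - n b • a)) z =
        P (mul a b) e * P b z - P (mul b (mul a b)) z -
        (n b * P a e * P e z - n b * P a z) := by
      rw [hPsub, hPsub, hPsub, hPsmul, hPsmul, hPsmul]
    rw [expand, key2 z]; ring
  -- the inverse of ab
  have hnab : n (mul a b) = n a * n b := hcomp a b
  have hnabne : n (mul a b) ≠ 0 := by rw [hnab]; exact mul_ne_zero ha hb
  refine ⟨(n a * n b)⁻¹ • C (mul a b), ?_, ?_, ?_, ?_, ?_⟩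
  · rw [hmul_smulL, hCxx, hnab, smul_smul, inv_mul_cancel₀ (mul_ne_zero ha hb), one_smul]
  · rw [hmul_smulR, hxCx, hnab, smul_smul, inv_mul_cancel₀ (mul_ne_zero ha hb), one_smul]
  · intro x
    rw [hmul_smulL, hA, smul_smul, hmul_smulL, hCmulL, smul_smul]
    rw [show (n a * n b)⁻¹ * n a * n b = 1 by field_simp, one_smul]
  · intro x
    rw [hmul_smulR, hB, smul_smul, hmul_smulR, hCmulR, smul_smul]
    rw [show (n a * n b)⁻¹ * n b * n a = 1 by field_simp, one_smul]
  · intro x y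
    rw [hcomp, hcomp, hcomp, hnab]; ring
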